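/- Let Γ be a simple connected 4-regular graph of order n, and let μ be the algebraic connectivity of Γ (the second smallest eigenvalue of the Laplacian matrix of Γ). Then the girth of Γ satisfies girth(Γ) ≥ ⌈n(μ−2)/μ⌉. -/

import Mathlib

open Finset SimpleGraph

/-- `μ` is the second smallest (counted with multiplicity) value of the family `e`. -/
def IsSecondSmallest {ι : Type*} (e : ι → ℝ) (μ : ℝ) : Prop :=
  ∃ i₀ i₁ : ι, i₀ ≠ i₁ ∧ e i₀ ≤ μ ∧ e i₁ = μ ∧ ∀ j : ι, j ≠ i₀ → μ ≤ e j

/-- `lam` is the largest value of the family `e`. -/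
def IsLargest {ι : Type*} (e : ι → ℝ) (lam : ℝ) : Prop :=
  (∃ i : ι, e i = lam) ∧ ∀ i : ι, e i ≤ lam

section Aux

open Matrix
open scoped RealInnerProductSpace

set_option linter.unusedSectionVars false

variable {V : Type*} [Fintype V] [DecidableEq V] (G : SimpleGraph V) [DecidableRel G.Adj]

theorem quad_eq (hL : (G.lapMatrix ℝ).IsHermitian) (x : V → ℝ) :
    (∑ v, x v * x v = ∑ j, (∑ v, hL.eigenvectorBasis j v * x v)^2) ∧
    (x ⬝ᵥ (G.lapMatrix ℝ *ᵥ x) = ∑ j, hL.eigenvalues j * (∑ v, hL.eigenvectorBasis j v * x v)^2) := by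
  have hinner : ∀ j, ⟪hL.eigenvectorBasis j, (WithLp.toLp 2 x : EuclideanSpace ℝ V)⟫
      = ∑ v, hL.eigenvectorBasis j v * x v := by
    intro j
    simp [PiLp.inner_apply, RCLike.inner_apply, conj_trivial, mul_comm]
  have hsymm : (G.lapMatrix ℝ)ᵀ = G.lapMatrix ℝ := by
    rw [← Matrix.conjTranspose_eq_transpose_of_trivial]; exact hL
  have hrepr : ∑ j, (⟪hL.eigenvectorBasis j, (WithLp.toLp 2 x : EuclideanSpace ℝ V)⟫
      • hL.eigenvectorBasis j) = (WithLp.toLp 2 x : EuclideanSpace ℝ V) :=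
    hL.eigenvectorBasis.sum_repr' (WithLp.toLp 2 x : EuclideanSpace ℝ V)
  have hBL : ∀ j, (hL.eigenvectorBasis j : V → ℝ) ⬝ᵥ (G.lapMatrix ℝ *ᵥ x)
      = hL.eigenvalues j * ⟪hL.eigenvectorBasis j, (WithLp.toLp 2 x : EuclideanSpace ℝ V)⟫ := by
    intro j
    calc (hL.eigenvectorBasis j : V → ℝ) ⬝ᵥ (G.lapMatrix ℝ *ᵥ x)
        = (G.lapMatrix ℝ *ᵥ (hL.eigenvectorBasis j : V → ℝ)) ⬝ᵥ x := by
          rw [dotProduct_mulVec, ← mulVec_transpose, hsymm]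
      _ = (hL.eigenvalues j • (hL.eigenvectorBasis j : V → ℝ)) ⬝ᵥ x :=
          congrArg (· ⬝ᵥ x) (hL.mulVec_eigenvectorBasis j)
      _ = hL.eigenvalues j * ((hL.eigenvectorBasis j : V → ℝ) ⬝ᵥ x) := smul_dotProduct _ _ _
      _ = hL.eigenvalues j * ⟪hL.eigenvectorBasis j, (WithLp.toLp 2 x : EuclideanSpace ℝ V)⟫ := by
          rw [hinner j]; simp [dotProduct]
  constructor
  · have h1 : ∑ v, x v * x v
        = ⟪(WithLp.toLp 2 x : EuclideanSpace ℝ V), (WithLp.toLp 2 x : EuclideanSpace ℝ V)⟫ := by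
      rw [PiLp.inner_apply]; simp [RCLike.inner_apply, conj_trivial, pow_two]
    have h2 : ⟪(WithLp.toLp 2 x : EuclideanSpace ℝ V), (WithLp.toLp 2 x : EuclideanSpace ℝ V)⟫
        = ⟪∑ j, (⟪hL.eigenvectorBasis j, (WithLp.toLp 2 x : EuclideanSpace ℝ V)⟫
            • hL.eigenvectorBasis j), (WithLp.toLp 2 x : EuclideanSpace ℝ V)⟫ := by
      rw [hrepr]
    rw [h1, h2, sum_inner]
    simp_rw [real_inner_smul_left, hinner, pow_two]
  · have h2 : x ⬝ᵥ (G.lapMatrix ℝ *ᵥ x)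
        = ⟪(WithLp.toLp 2 x : EuclideanSpace ℝ V), (WithLp.toLp 2 (G.lapMatrix ℝ *ᵥ x) : EuclideanSpace ℝ V)⟫ := by
      simp [PiLp.inner_apply, RCLike.inner_apply, conj_trivial, dotProduct, mul_comm]
    have h3 : ∀ j, ⟪hL.eigenvectorBasis j, (WithLp.toLp 2 (G.lapMatrix ℝ *ᵥ x) : EuclideanSpace ℝ V)⟫
        = hL.eigenvalues j * ⟪hL.eigenvectorBasis j, (WithLp.toLp 2 x : EuclideanSpace ℝ V)⟫ := by
      intro j
      rw [← hBL j]
      simp [PiLp.inner_apply, RCLike.inner_apply, conj_trivial, dotProduct, mul_comm]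
    have h4 : ⟪(WithLp.toLp 2 x : EuclideanSpace ℝ V), (WithLp.toLp 2 (G.lapMatrix ℝ *ᵥ x) : EuclideanSpace ℝ V)⟫
        = ⟪∑ j, (⟪hL.eigenvectorBasis j, (WithLp.toLp 2 x : EuclideanSpace ℝ V)⟫
            • hL.eigenvectorBasis j), (WithLp.toLp 2 (G.lapMatrix ℝ *ᵥ x) : EuclideanSpace ℝ V)⟫ := by
      rw [hrepr]
    rw [h2, h4, sum_inner]
    simp_rw [real_inner_smul_left, h3, hinner, pow_two]
    congr 1; funext j; ring

theorem rayleigh (hconn : G.Connected) (hL : (G.lapMatrix ℝ).IsHermitian) (mu : ℝ)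
    (hss : IsSecondSmallest hL.eigenvalues mu) :
    0 < mu ∧ ∀ x : V → ℝ, (∑ v, x v = 0) →
      mu * (∑ v, x v * x v) ≤ x ⬝ᵥ (G.lapMatrix ℝ *ᵥ x) := by
  obtain ⟨i₀, i₁, hne, hle0, heq1, hmin⟩ := hss
  have hPSD : (G.lapMatrix ℝ).PosSemidef := posSemidef_lapMatrix ℝ G
  have nonneg : ∀ j, 0 ≤ hL.eigenvalues j := fun j => hPSD.eigenvalues_nonneg j
  have hV : Nonempty V := hconn.nonempty
  obtain ⟨v₀⟩ := hV
  have hip : ∀ (a b : EuclideanSpace ℝ V), ⟪a, b⟫ = ∑ v, a v * b v := by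
    intro a b
    simp [PiLp.inner_apply, RCLike.inner_apply, conj_trivial, mul_comm]
  have hON := orthonormal_iff_ite.mp hL.eigenvectorBasis.orthonormal
  -- constancy of null eigenvectors
  have hconst : ∀ j, hL.eigenvalues j = 0 → ∀ v, hL.eigenvectorBasis j v = hL.eigenvectorBasis j v₀ := by
    intro j hj v
    have h1 := hL.mulVec_eigenvectorBasis j
    rw [hj, zero_smul] at h1
    have h2 : Matrix.toLin' (G.lapMatrix ℝ) (hL.eigenvectorBasis j : V → ℝ) = 0 := by
      rw [Matrix.toLin'_apply]; exact h1
    exact (G.lapMatrix_mulVec_eq_zero_iff_forall_reachable).1 h1 v v₀ (hconn v v₀)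
  -- the all-ones vector analysis
  have hone := quad_eq G hL (fun _ => (1:ℝ))
  have honeL : (fun _ => (1:ℝ)) ⬝ᵥ (G.lapMatrix ℝ *ᵥ (fun _ => (1:ℝ))) = 0 := by
    rw [G.lapMatrix_mulVec_const_eq_zero]
    simp [dotProduct]
  have hsum0 : ∑ j, hL.eigenvalues j * (∑ v, hL.eigenvectorBasis j v * 1)^2 = 0 := by
    rw [← hone.2]; exact honeL
  have hterm0 : ∀ j ∈ univ, hL.eigenvalues j * (∑ v, hL.eigenvectorBasis j v * 1)^2 = 0 :=
    (Finset.sum_eq_zero_iff_of_nonneg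
      (fun j _ => mul_nonneg (nonneg j) (sq_nonneg _))).1 hsum0
  have hcard : (0:ℝ) < Fintype.card V := by
    have := @Fintype.card_pos V _ ⟨v₀⟩
    exact_mod_cast this
  have hC : (Fintype.card V : ℝ) = ∑ j, (∑ v, hL.eigenvectorBasis j v * 1)^2 := by
    have := hone.1
    simpa [Finset.card_univ] using this
  have hex : ∃ k, (∑ v, hL.eigenvectorBasis k v * 1) ≠ 0 := by
    by_contra h
    push_neg at h
    rw [Finset.sum_eq_zero (fun j _ => by rw [h j]; ring)] at hC
    exact hcard.ne' hC
  obtain ⟨k, hk⟩ := hex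
  have hek : hL.eigenvalues k = 0 := by
    have := hterm0 k (mem_univ k)
    rcases mul_eq_zero.1 this with h | h
    · exact h
    · exact absurd (pow_eq_zero_iff (by norm_num) |>.1 h) hk
  have hmu0 : 0 ≤ mu := heq1 ▸ nonneg i₁
  -- mu > 0
  have hmupos : 0 < mu := by
    rcases hmu0.lt_or_eq with h | h
    · exact h
    exfalso
    have hei₀ : hL.eigenvalues i₀ = 0 := le_antisymm (hle0.trans h.symm.le) (nonneg i₀)
    have hei₁ : hL.eigenvalues i₁ = 0 := heq1.trans h.symm
    have hc₀ := hconst i₀ hei₀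
    have hc₁ := hconst i₁ hei₁
    have horth : (0:ℝ) = ∑ v, hL.eigenvectorBasis i₀ v * hL.eigenvectorBasis i₁ v := by
      rw [← hip]
      have := hON i₀ i₁
      rw [if_neg hne] at this
      exact this.symm
    have hn₀ : (1:ℝ) = ∑ v, hL.eigenvectorBasis i₀ v * hL.eigenvectorBasis i₀ v := by
      rw [← hip]
      have := hON i₀ i₀
      rw [if_pos rfl] at this
      exact this.symm
    have hn₁ : (1:ℝ) = ∑ v, hL.eigenvectorBasis i₁ v * hL.eigenvectorBasis i₁ v := by
      rw [← hip]
      have := hON i₁ i₁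
      rw [if_pos rfl] at this
      exact this.symm
    rw [Finset.sum_congr rfl (fun v _ => by rw [hc₀ v, hc₁ v])] at horth
    rw [Finset.sum_congr rfl (fun v _ => by rw [hc₀ v])] at hn₀
    rw [Finset.sum_congr rfl (fun v _ => by rw [hc₁ v])] at hn₁
    simp only [Finset.sum_const, Finset.card_univ, nsmul_eq_mul] at horth hn₀ hn₁
    have hab : hL.eigenvectorBasis i₀ v₀ * hL.eigenvectorBasis i₁ v₀ = 0 := by
      rcases mul_eq_zero.1 horth.symm with h' | h'
      · exact absurd h' hcard.ne'
      · exact h'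
    rcases mul_eq_zero.1 hab with h' | h'
    · rw [h'] at hn₀; simp at hn₀
    · rw [h'] at hn₁; simp at hn₁
  refine ⟨hmupos, fun x hx => ?_⟩
  -- e i₀ = 0 and B i₀ constant
  have hei₀ : hL.eigenvalues i₀ = 0 := by
    by_cases hk0 : k = i₀
    · rw [← hk0]; exact hek
    · exact absurd (hek ▸ hmin k hk0) (by linarith)
  have hc₀ := hconst i₀ hei₀
  have hcx : (∑ v, hL.eigenvectorBasis i₀ v * x v) = 0 := by
    rw [Finset.sum_congr rfl (fun v _ => by rw [hc₀ v])]
    rw [← Finset.mul_sum, hx, mul_zero]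
  obtain ⟨hq1, hq2⟩ := quad_eq G hL x
  rw [hq1, hq2]
  rw [Finset.mul_sum]
  apply Finset.sum_le_sum
  intro j _
  by_cases hj : j = i₀
  · subst hj
    rw [hcx]
    simp
  · exact mul_le_mul_of_nonneg_right (hmin j hj) (sq_nonneg _)

lemma cycle_card {a : V} (w : G.Walk a a) (hw : w.IsCycle) :
    w.support.tail.toFinset.card = w.length := by
  rw [List.toFinset_card_of_nodup hw.support_nodup, List.length_tail, Walk.length_support]
  simp

lemma tail_mem {a : V} (w : G.Walk a a) (hw : w.IsCycle) :
    ∀ v, v ∈ w.support → v ∈ w.support.tail := by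
  have ha : a ∈ w.support.tail := by
    cases w with
    | nil => exact absurd rfl hw.ne_nil
    | @cons _ b _ h q =>
      simp only [Walk.support_cons, List.tail_cons]
      exact q.end_mem_support
  intro v hv
  rcases (Walk.mem_support_iff w).1 hv with h | h
  · exact h ▸ ha
  · exact h

lemma cycle_dsum {a : V} (w : G.Walk a a) (hw : w.IsCycle) :
    2 * (w.length : ℝ) ≤ ∑ i, ∑ j, (if G.Adj i j ∧ i ∈ w.support.tail.toFinset ∧
      j ∈ w.support.tail.toFinset then (1:ℝ) else 0) := by
  classical
  set S := w.support.tail.toFinset with hS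
  have hdn : w.darts.Nodup := by
    have := hw.isCircuit.isTrail.edges_nodup
    rw [Walk.edges] at this
    exact List.Nodup.of_map _ this
  have hinj1 : Function.Injective (fun d : G.Dart => (d.fst, d.snd)) := by
    intro d d' h
    exact Dart.ext _ _ h
  have hinj2 : Function.Injective (fun d : G.Dart => (d.snd, d.fst)) := by
    intro d d' h
    apply Dart.ext
    have h1 := congrArg Prod.fst h
    have h2 := congrArg Prod.snd h
    exact Prod.ext h2 h1
  set F1 : Finset (V × V) := w.darts.toFinset.image (fun d => (d.fst, d.snd)) with hF1
  set F2 : Finset (V × V) := w.darts.toFinset.image (fun d => (d.snd, d.fst)) with hF2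
  have hc1 : F1.card = w.length := by
    rw [hF1, Finset.card_image_of_injective _ hinj1, List.toFinset_card_of_nodup hdn,
      Walk.length_darts]
  have hc2 : F2.card = w.length := by
    rw [hF2, Finset.card_image_of_injective _ hinj2, List.toFinset_card_of_nodup hdn,
      Walk.length_darts]
  have hdisj : Disjoint F1 F2 := by
    rw [Finset.disjoint_left]
    rintro p hp1 hp2
    simp only [hF1, hF2, Finset.mem_image, List.mem_toFinset] at hp1 hp2
    obtain ⟨d, hd, hde⟩ := hp1
    obtain ⟨d', hd', hde'⟩ := hp2
    have hsymm : d = d'.symm := by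
      apply Dart.ext
      rw [Dart.symm_toProd]
      have h1 : d.fst = d'.snd := by rw [← hde'] at hde; exact congrArg Prod.fst hde
      have h2 : d.snd = d'.fst := by rw [← hde'] at hde; exact congrArg Prod.snd hde
      exact Prod.ext h1 h2
    have hedge : d.edge = d'.edge := by rw [hsymm, Dart.edge_symm]
    have heq : d = d' := List.inj_on_of_nodup_map hw.isCircuit.isTrail.edges_nodup hd hd' hedge
    rw [heq] at hsymm
    have hfst : d'.fst = d'.snd := by nth_rewrite 1 [hsymm]; rfl
    exact G.ne_of_adj d'.adj hfst
  have hcond : ∀ p ∈ F1 ∪ F2, (G.Adj p.1 p.2 ∧ p.1 ∈ S ∧ p.2 ∈ S) := by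
    intro p hp
    rw [Finset.mem_union] at hp
    rcases hp with hp | hp <;>
    · simp only [hF1, hF2, Finset.mem_image, List.mem_toFinset] at hp
      obtain ⟨d, hd, rfl⟩ := hp
      refine ⟨?_, ?_, ?_⟩
      · first
        | exact d.adj
        | exact d.adj.symm
      all_goals
        simp only [hS, List.mem_toFinset]
        first
        | exact tail_mem G w hw _ (Walk.dart_fst_mem_support_of_mem_darts w hd)
        | exact tail_mem G w hw _ (Walk.dart_snd_mem_support_of_mem_darts w hd)
  calc 2 * (w.length : ℝ) = ((F1 ∪ F2).card : ℝ) := by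
        rw [Finset.card_union_of_disjoint hdisj, hc1, hc2]
        push_cast
        ring
    _ = ∑ p ∈ F1 ∪ F2, (1:ℝ) := by simp
    _ = ∑ p ∈ F1 ∪ F2, (if G.Adj p.1 p.2 ∧ p.1 ∈ S ∧ p.2 ∈ S then (1:ℝ) else 0) :=
        Finset.sum_congr rfl fun p hp => by rw [if_pos (hcond p hp)]
    _ ≤ ∑ p ∈ univ ×ˢ univ, (if G.Adj p.1 p.2 ∧ p.1 ∈ S ∧ p.2 ∈ S then (1:ℝ) else 0) := by
        apply Finset.sum_le_sum_of_subset_of_nonneg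
        · intro p _
          simp
        · intro p _ _
          split <;> norm_num
    _ = ∑ i, ∑ j, (if G.Adj i j ∧ i ∈ S ∧ j ∈ S then (1:ℝ) else 0) := by
        rw [← Finset.sum_product']


end Aux

open Matrix in
theorem stmt_8 {V : Type*} [Fintype V] [DecidableEq V]
    (G : SimpleGraph V) [DecidableRel G.Adj]
    (n : ℕ) (hn : Fintype.card V = n)
    (hconn : G.Connected)
    (hreg : G.IsRegularOfDegree 4)
    (mu : ℝ) (hmu : ∃ hL : (G.lapMatrix ℝ).IsHermitian, IsSecondSmallest hL.eigenvalues mu)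
    :
    ((⌈(n : ℝ) * (mu - 2) / mu⌉.toNat : ℕ∞) ≤ G.egirth) := by
  classical
  obtain ⟨hL, hss⟩ := hmu
  obtain ⟨hmupos, hray⟩ := rayleigh G hconn hL mu hss
  rw [le_egirth]
  intro a w hw
  have hn0 : 0 < n := by
    rw [← hn]
    exact @Fintype.card_pos V _ hconn.nonempty
  have hℓ3 : 3 ≤ w.length := hw.three_le_length
  have hcardS : (w.support.tail.toFinset).card = w.length := cycle_card G w hw
  have hℓn : w.length ≤ n := by
    rw [← hn, ← hcardS]
    exact Finset.card_le_univ _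
  suffices h : (n:ℝ) * (mu - 2) / mu ≤ (w.length : ℝ) by
    have h1 : ⌈(n:ℝ) * (mu - 2) / mu⌉ ≤ (w.length : ℤ) := Int.ceil_le.mpr (by exact_mod_cast h)
    have h2 : ⌈(n:ℝ) * (mu - 2) / mu⌉.toNat ≤ w.length := Int.toNat_le.mpr h1
    exact_mod_cast h2
  rw [div_le_iff₀ hmupos]
  have hnR : (0:ℝ) < n := by exact_mod_cast hn0
  have hℓR : (0:ℝ) < (w.length : ℝ) := by
    have : 0 < w.length := by omega
    exact_mod_cast this
  rcases eq_or_lt_of_le hℓn with heq | hlt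
  · have hE : (w.length : ℝ) = n := by exact_mod_cast heq
    nlinarith [hnR, hE]
  · have hltR : (w.length : ℝ) < n := by exact_mod_cast hlt
    set S := w.support.tail.toFinset with hSdef
    set x : V → ℝ := fun v => if v ∈ S then (n:ℝ) - w.length else -(w.length:ℝ) with hxdef
    have hSc : Sᶜ.card = n - w.length := by
      rw [Finset.card_compl, hcardS, hn]
    have hcast : ((n - w.length : ℕ) : ℝ) = (n:ℝ) - w.length := by
      exact Nat.cast_sub hℓn
    have hfilter : univ.filter (fun v => v ∈ S) = S := by ext v; simp
    have hfilter' : univ.filter (fun v => ¬ v ∈ S) = Sᶜ := by ext v; simp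
    have hsum : ∑ v, x v = 0 := by
      rw [hxdef, Finset.sum_ite, hfilter, hfilter', Finset.sum_const, Finset.sum_const,
        hcardS, hSc, nsmul_eq_mul, nsmul_eq_mul, hcast]
      ring
    have hxx : ∑ v, x v * x v = (w.length : ℝ) * ((n:ℝ) - w.length) * n := by
      have hpt : ∀ v, x v * x v = if v ∈ S then ((n:ℝ) - w.length)^2 else ((w.length:ℝ))^2 := by
        intro v
        by_cases h : v ∈ S <;> simp [hxdef, h] <;> ring
      rw [Finset.sum_congr rfl (fun v _ => hpt v), Finset.sum_ite, hfilter, hfilter',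
        Finset.sum_const, Finset.sum_const, hcardS, hSc, nsmul_eq_mul, nsmul_eq_mul, hcast]
      ring
    -- quadratic form bound
    have hform : x ⬝ᵥ (G.lapMatrix ℝ *ᵥ x)
        = (∑ i, ∑ j, if G.Adj i j then (x i - x j)^2 else 0) / 2 := by
      rw [← Matrix.toLinearMap₂'_apply', lapMatrix_toLinearMap₂' (R := ℝ)]
    have hterm : ∀ i j, (if G.Adj i j then (x i - x j)^2 else 0)
        = (n:ℝ)^2 * ((if G.Adj i j ∧ i ∈ S ∧ j ∉ S then (1:ℝ) else 0)
          + (if G.Adj i j ∧ i ∉ S ∧ j ∈ S then (1:ℝ) else 0)) := by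
      intro i j
      by_cases h1 : G.Adj i j <;> by_cases h2 : i ∈ S <;> by_cases h3 : j ∈ S <;>
        simp [hxdef, h1, h2, h3] <;> ring
    have hd1 : ∀ i j, (if G.Adj i j ∧ i ∈ S ∧ j ∉ S then (1:ℝ) else 0)
        = (if G.Adj i j ∧ i ∈ S then (1:ℝ) else 0)
          - (if G.Adj i j ∧ i ∈ S ∧ j ∈ S then (1:ℝ) else 0) := by
      intro i j
      by_cases h1 : G.Adj i j <;> by_cases h2 : i ∈ S <;> by_cases h3 : j ∈ S <;>
        simp [h1, h2, h3]
    have hd2 : ∀ i j, (if G.Adj i j ∧ i ∉ S ∧ j ∈ S then (1:ℝ) else 0)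
        = (if G.Adj i j ∧ j ∈ S then (1:ℝ) else 0)
          - (if G.Adj i j ∧ i ∈ S ∧ j ∈ S then (1:ℝ) else 0) := by
      intro i j
      by_cases h1 : G.Adj i j <;> by_cases h2 : i ∈ S <;> by_cases h3 : j ∈ S <;>
        simp [h1, h2, h3]
    have hT1 : ∑ i, ∑ j, (if G.Adj i j ∧ i ∈ S then (1:ℝ) else 0) = 4 * w.length := by
      have hrow : ∀ i, ∑ j, (if G.Adj i j ∧ i ∈ S then (1:ℝ) else 0)
          = if i ∈ S then (4:ℝ) else 0 := by
        intro i
        by_cases h : i ∈ S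
        · simp only [h, and_true, if_pos]
          rw [← G.degree_eq_sum_if_adj i, hreg i]
          norm_num
        · simp [h]
      rw [Finset.sum_congr rfl (fun i _ => hrow i), Finset.sum_ite, hfilter, hfilter',
        Finset.sum_const, Finset.sum_const, hcardS, nsmul_eq_mul, nsmul_eq_mul]
      ring
    have hT2 : ∑ i, ∑ j, (if G.Adj i j ∧ j ∈ S then (1:ℝ) else 0) = 4 * w.length := by
      rw [Finset.sum_comm]
      have hrow : ∀ j, ∑ i, (if G.Adj i j ∧ j ∈ S then (1:ℝ) else 0)
          = if j ∈ S then (4:ℝ) else 0 := by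
        intro j
        by_cases h : j ∈ S
        · simp only [h, and_true, if_pos]
          have : ∀ i, (if G.Adj i j then (1:ℝ) else 0) = (if G.Adj j i then (1:ℝ) else 0) := by
            intro i
            exact if_congr (G.adj_comm i j) rfl rfl
          rw [Finset.sum_congr rfl (fun i _ => this i), ← G.degree_eq_sum_if_adj j, hreg j]
          norm_num
        · simp [h]
      rw [Finset.sum_congr rfl (fun j _ => hrow j), Finset.sum_ite, hfilter, hfilter',
        Finset.sum_const, Finset.sum_const, hcardS, nsmul_eq_mul, nsmul_eq_mul]
      ring
    have hD : 2 * (w.length : ℝ) ≤ ∑ i, ∑ j, (if G.Adj i j ∧ i ∈ S ∧ j ∈ S then (1:ℝ) else 0) :=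
      cycle_dsum G w hw
    have hQ : x ⬝ᵥ (G.lapMatrix ℝ *ᵥ x) ≤ 2 * (w.length:ℝ) * (n:ℝ)^2 := by
      rw [hform]
      have hsplit : ∑ i, ∑ j, (if G.Adj i j then (x i - x j)^2 else 0)
          = (n:ℝ)^2 * ((∑ i, ∑ j, (if G.Adj i j ∧ i ∈ S then (1:ℝ) else 0))
            + (∑ i, ∑ j, (if G.Adj i j ∧ j ∈ S then (1:ℝ) else 0))
            - 2 * (∑ i, ∑ j, (if G.Adj i j ∧ i ∈ S ∧ j ∈ S then (1:ℝ) else 0))) := by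
        simp_rw [hterm, hd1, hd2]
        simp_rw [← Finset.mul_sum]
        congr 1
        simp_rw [Finset.sum_add_distrib, Finset.sum_sub_distrib]
        ring
      rw [hsplit, hT1, hT2]
      nlinarith [hD, sq_nonneg (n:ℝ)]
    have hkey := hray x hsum
    rw [hxx] at hkey
    have h5 : mu * ((n:ℝ) - w.length) ≤ 2 * n := by
      nlinarith [hkey.trans hQ, mul_pos hℓR hnR]
    nlinarith [h5]
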